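/- Let p be a real pyramid, J = [a,b) a real interval, and D(p) the set of discontinuity points of p. Then p + 1_J is a real pyramid if and only if exactly one of the following holds: (1) 0 < a, a ∈ D(p) and b ∉ D(p); (2) a ≤ 0 < b, a ∉ D(p) and b ∉ D(p); (3) b ≤ 0, b ∈ D(p) and a ∉ D(p). -/

import Mathlib

noncomputable section
open Function
open scoped Classical
open Filter Topology Set

/-- The `ℕ`-valued indicator function of the interval `[a, b)`. -/
def ind (a b : ℝ) : ℝ → ℕ := (Set.Ico a b).indicator fun _ => 1

/-- A real pyramid: a function `p : ℝ → ℕ` vanishing outside a bounded set, maximal at `0`,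
nondecreasing on `(-∞, 0]`, nonincreasing on `[0, ∞)`, right-continuous and piecewise
constant with finitely many discontinuities, and with jumps of size at most 1
(`p₋(x)` is the left limit of `p` at `x`). -/
def IsRealPyramid (p : ℝ → ℕ) : Prop :=
  (∃ M : ℝ, ∀ x : ℝ, M ≤ |x| → p x = 0) ∧
  (∀ x, p x ≤ p 0) ∧
  (∀ ⦃x y : ℝ⦄, x ≤ y → y ≤ 0 → p x ≤ p y) ∧
  (∀ ⦃x y : ℝ⦄, 0 ≤ x → x ≤ y → p y ≤ p x) ∧
  (∀ x, ContinuousWithinAt p (Set.Ici x) x) ∧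
  {x : ℝ | ¬ ContinuousAt p x}.Finite ∧
  (∀ x, |(p x : ℤ) - ((Function.leftLim p x : ℕ) : ℤ)| ≤ 1)

/-- The interval `[a, b)` is addable for `p` if `p + 1_{[a,b)}` is again a real pyramid. -/
def Addable (p : ℝ → ℕ) (a b : ℝ) : Prop := IsRealPyramid (fun x => p x + ind a b x)

/-- The interval `[a, b)` is removable for `p` if `p ≥ 1` on `[a, b)` and `p − 1_{[a,b)}`
is again a real pyramid. -/
def Removable (p : ℝ → ℕ) (a b : ℝ) : Prop :=
  (∀ x ∈ Set.Ico a b, 1 ≤ p x) ∧ IsRealPyramid (fun x => p x - ind a b x)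

/-- `n_J(p)`: `1` if `J = [a,b)` is addable for `p`, `−1` if removable, `0` otherwise. -/
def nJ (p : ℝ → ℕ) (a b : ℝ) : ℤ :=
  if Addable p a b then 1 else if Removable p a b then -1 else 0

lemma ind_of_mem {a b x : ℝ} (h1 : a ≤ x) (h2 : x < b) : ind a b x = 1 := by
  unfold ind; exact Set.indicator_of_mem (Set.mem_Ico.mpr ⟨h1, h2⟩) _

lemma ind_of_not_mem {a b x : ℝ} (h : ¬ (a ≤ x ∧ x < b)) : ind a b x = 0 := by
  unfold ind; exact Set.indicator_of_notMem (by simpa [Set.mem_Ico] using h) _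

lemma nat_pure {c : ℕ} : 𝓝 c = pure c := congrFun (nhds_discrete ℕ) c

lemma cwa_iff {f : ℝ → ℕ} {x : ℝ} :
    ContinuousWithinAt f (Set.Ici x) x ↔ ∀ᶠ y in 𝓝[≥] x, f y = f x := by
  unfold ContinuousWithinAt; rw [nat_pure]; exact tendsto_pure

lemma contAt_iff {f : ℝ → ℕ} {x : ℝ} :
    ContinuousAt f x ↔ ∀ᶠ y in 𝓝 x, f y = f x := by
  unfold ContinuousAt; rw [nat_pure]; exact tendsto_pure

lemma leftLim_eq_of_eventually {f : ℝ → ℕ} {x : ℝ} {c : ℕ}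
    (h : ∀ᶠ y in 𝓝[<] x, f y = c) : Function.leftLim f x = c := by
  refine leftLim_eq_of_tendsto ?_
  rw [nat_pure]; exact tendsto_pure.2 h

lemma ind_right_ev (a b x : ℝ) : ∀ᶠ y in 𝓝[≥] x, ind a b y = ind a b x := by
  rcases lt_or_ge x a with h | h
  · filter_upwards [Ico_mem_nhdsGE_of_mem (Set.mem_Ico.mpr ⟨le_refl x, h⟩)] with y hy
    rw [ind_of_not_mem (by rintro ⟨h1, _⟩; exact absurd hy.2 (not_lt.2 h1)),
      ind_of_not_mem (by rintro ⟨h1, _⟩; exact absurd h (not_lt.2 h1))]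
  · rcases lt_or_ge x b with h2 | h2
    · filter_upwards [Ico_mem_nhdsGE_of_mem (Set.mem_Ico.mpr ⟨le_refl x, h2⟩)] with y hy
      rw [ind_of_mem (h.trans hy.1) hy.2, ind_of_mem h h2]
    · filter_upwards [self_mem_nhdsWithin] with y (hy : x ≤ y)
      rw [ind_of_not_mem (by rintro ⟨_, h1⟩; exact absurd (h2.trans hy) (not_le.2 h1)),
        ind_of_not_mem (by rintro ⟨_, h1⟩; exact absurd h2 (not_le.2 h1))]

lemma ind_left_ev (a b x : ℝ) :
    ∀ᶠ y in 𝓝[<] x, ind a b y = if a < x ∧ x ≤ b then 1 else 0 := by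
  by_cases h : a < x ∧ x ≤ b
  · rw [if_pos h]
    filter_upwards [Ioo_mem_nhdsLT_of_mem (Set.mem_Ioc.mpr ⟨h.1, le_refl x⟩)] with y hy
    exact ind_of_mem hy.1.le (lt_of_lt_of_le hy.2 h.2)
  · rw [if_neg h]
    rcases not_and_or.mp h with h1 | h2
    · filter_upwards [self_mem_nhdsWithin] with y (hy : y < x)
      exact ind_of_not_mem (by rintro ⟨h3, _⟩; exact h1 (lt_of_le_of_lt h3 hy))
    · have hbx : b < x := not_le.mp h2
      filter_upwards [Ioo_mem_nhdsLT_of_mem (Set.mem_Ioc.mpr ⟨hbx, le_refl x⟩)] with y hy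
      exact ind_of_not_mem (by rintro ⟨_, h3⟩; exact absurd hy.1 (not_lt.2 h3.le))

lemma left_ev_exists {p : ℝ → ℕ} (hmax : ∀ x, p x ≤ p 0)
    (hmono : ∀ ⦃x y : ℝ⦄, x ≤ y → y ≤ 0 → p x ≤ p y)
    (hanti : ∀ ⦃x y : ℝ⦄, 0 ≤ x → x ≤ y → p y ≤ p x) (x : ℝ) :
    ∀ᶠ y in 𝓝[<] x, p y = Function.leftLim p x := by
  suffices h : ∃ c, ∀ᶠ y in 𝓝[<] x, p y = c by
    obtain ⟨c, hc⟩ := h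
    rwa [leftLim_eq_of_eventually hc]
  rcases le_or_gt x 0 with hx | hx
  · set S : Set ℕ := p '' Set.Ioo (x - 1) x with hS
    have hne : S.Nonempty := (Set.nonempty_Ioo.mpr (by linarith)).image p
    have hbdd : BddAbove S := ⟨p 0, by rintro n ⟨y, _, rfl⟩; exact hmax y⟩
    obtain ⟨y₀, hy₀, hy₀v⟩ := Nat.sSup_mem hne hbdd
    refine ⟨sSup S, ?_⟩
    filter_upwards [Ioo_mem_nhdsLT_of_mem (Set.mem_Ioc.mpr ⟨hy₀.2, le_refl x⟩)] with y hy
    have h1 : p y₀ ≤ p y := hmono hy.1.le (hy.2.le.trans hx)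
    have h2 : p y ≤ sSup S := le_csSup hbdd ⟨y, ⟨hy₀.1.trans hy.1, hy.2⟩, rfl⟩
    omega
  · set S : Set ℕ := p '' Set.Ioo (x / 2) x with hS
    have hne : S.Nonempty := (Set.nonempty_Ioo.mpr (by linarith)).image p
    obtain ⟨y₀, hy₀, hy₀v⟩ := Nat.sInf_mem hne
    refine ⟨sInf S, ?_⟩
    filter_upwards [Ioo_mem_nhdsLT_of_mem (Set.mem_Ioc.mpr ⟨hy₀.2, le_refl x⟩)] with y hy
    have h1 : p y ≤ p y₀ := hanti (by linarith [hy₀.1]) hy.1.le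
    have h2 : sInf S ≤ p y := Nat.sInf_le ⟨y, ⟨hy₀.1.trans hy.1, hy.2⟩, rfl⟩
    omega

lemma left_wit {p : ℝ → ℕ} {x : ℝ} (hev : ∀ᶠ y in 𝓝[<] x, p y = Function.leftLim p x)
    {t : ℝ} (ht : t < x) : ∃ y, t < y ∧ y < x ∧ p y = Function.leftLim p x := by
  have h2 : ∀ᶠ y in 𝓝[<] x, y ∈ Set.Ioo t x :=
    Ioo_mem_nhdsLT_of_mem (Set.mem_Ioc.mpr ⟨ht, le_refl x⟩)
  obtain ⟨y, hy1, hy2⟩ := (h2.and hev).exists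
  exact ⟨y, hy1.1, hy1.2, hy2⟩

lemma contAt_iff_leftLim {p : ℝ → ℕ} {x : ℝ}
    (hrc : ContinuousWithinAt p (Set.Ici x) x)
    (hev : ∀ᶠ y in 𝓝[<] x, p y = Function.leftLim p x) :
    ContinuousAt p x ↔ Function.leftLim p x = p x := by
  constructor
  · intro h
    obtain ⟨y, h1, h2⟩ := (hev.and ((contAt_iff.mp h).filter_mono nhdsWithin_le_nhds)).exists
    rw [← h1, h2]
  · intro h
    rw [contAt_iff, ← nhdsLT_sup_nhdsGE x, eventually_sup]
    exact ⟨hev.mono fun y hy => by rw [hy, h], cwa_iff.mp hrc⟩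

/-- `p + 1_{[a,b)}` is a real pyramid iff exactly one of the three listed
(mutually exclusive) conditions on the endpoints and the discontinuity set
`D(p) = {x | p is discontinuous at x}` holds. -/
theorem addable_iff (p : ℝ → ℕ) (hp : IsRealPyramid p) (a b : ℝ) (hab : a < b) :
    IsRealPyramid (fun x => p x + ind a b x) ↔
      ((0 < a ∧ ¬ ContinuousAt p a ∧ ContinuousAt p b) ∨
       (a ≤ 0 ∧ 0 < b ∧ ContinuousAt p a ∧ ContinuousAt p b) ∨
       (b ≤ 0 ∧ ¬ ContinuousAt p b ∧ ContinuousAt p a)) := by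
  obtain ⟨⟨M, hM⟩, hmax, hmono, hanti, hrc, hfin, hjump⟩ := hp
  set L := Function.leftLim p with hL
  have hLev : ∀ x, ∀ᶠ y in 𝓝[<] x, p y = L x := left_ev_exists hmax hmono hanti
  have hwit : ∀ x t : ℝ, t < x → ∃ y, t < y ∧ y < x ∧ p y = L x :=
    fun x t ht => left_wit (hLev x) ht
  have hcont : ∀ x, ContinuousAt p x ↔ L x = p x :=
    fun x => contAt_iff_leftLim (hrc x) (hLev x)
  have hLle : ∀ x : ℝ, x ≤ 0 → L x ≤ p x := by
    intro x hx
    obtain ⟨y, _, hy2, hy3⟩ := hwit x (x - 1) (by linarith)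
    rw [← hy3]; exact hmono hy2.le hx
  have hLge : ∀ x : ℝ, 0 < x → p x ≤ L x := by
    intro x hx
    obtain ⟨y, hy1, hy2, hy3⟩ := hwit x (x/2) (by linarith)
    rw [← hy3]; exact hanti (by linarith) hy2.le
  have hL0 : ∀ x : ℝ, L x ≤ p 0 := by
    intro x
    obtain ⟨y, _, _, hy3⟩ := hwit x (x - 1) (by linarith)
    rw [← hy3]; exact hmax y
  have hqL : ∀ x : ℝ, Function.leftLim (fun z => p z + ind a b z) x
      = L x + (if a < x ∧ x ≤ b then 1 else 0) := by
    intro x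
    apply leftLim_eq_of_eventually
    filter_upwards [hLev x, ind_left_ev a b x] with y h1 h2
    simp only [h1, h2]
  constructor
  · intro hq
    unfold IsRealPyramid at hq
    obtain ⟨_, _, hqmono, hqanti, _, _, hqjump⟩ := hq
    have jump : ∀ x : ℝ, |((p x + ind a b x : ℕ) : ℤ)
        - ((L x + (if a < x ∧ x ≤ b then 1 else 0) : ℕ) : ℤ)| ≤ 1 := by
      intro x
      have h := hqjump x
      rwa [hqL x] at h
    have contb : 0 < b → L b = p b := by
      intro hb
      have h1 := jump b
      rw [ind_of_not_mem (fun h => lt_irrefl b h.2), if_pos ⟨hab, le_refl b⟩, abs_le] at h1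
      have h2 := hLge b hb
      omega
    rcases lt_or_ge 0 a with ha | ha
    · left
      refine ⟨ha, ?_, (hcont b).mpr (contb (ha.trans hab))⟩
      rw [hcont a]
      obtain ⟨y, hy0, hya, hyv⟩ := hwit a 0 ha
      have h1 : p a + ind a b a ≤ p y + ind a b y := hqanti hy0.le hya.le
      rw [ind_of_mem (le_refl a) hab,
        ind_of_not_mem (fun h => absurd hya (not_lt.2 h.1))] at h1
      omega
    · have conta : L a = p a := by
        have h1 := jump a
        rw [ind_of_mem (le_refl a) hab, if_neg (fun h => lt_irrefl a h.1), abs_le] at h1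
        have h2 := hLle a ha
        omega
      rcases le_or_gt b 0 with hb | hb
      · right; right
        refine ⟨hb, ?_, (hcont a).mpr conta⟩
        rw [hcont b]
        obtain ⟨y, hya, hyb, hyv⟩ := hwit b a hab
        have h1 : p y + ind a b y ≤ p b + ind a b b := hqmono hyb.le hb
        rw [ind_of_mem hya.le hyb, ind_of_not_mem (fun h => lt_irrefl b h.2)] at h1
        omega
      · exact Or.inr (Or.inl ⟨ha, hb, (hcont a).mpr conta, (hcont b).mpr (contb hb)⟩)
  · intro h
    have key : (0 < a ∧ L a = p a + 1 ∧ L b = p b) ∨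
        (a ≤ 0 ∧ 0 < b ∧ L a = p a ∧ L b = p b) ∨
        (b ≤ 0 ∧ p b = L b + 1 ∧ L a = p a) := by
      rcases h with ⟨ha, hda, hcb⟩ | ⟨ha, hb, hca, hcb⟩ | ⟨hb, hdb, hca⟩
      · refine Or.inl ⟨ha, ?_, (hcont b).mp hcb⟩
        have h1 : L a ≠ p a := fun hh => hda ((hcont a).mpr hh)
        have h2 := hLge a ha
        have h3 := hjump a
        rw [abs_le] at h3
        omega
      · exact Or.inr (Or.inl ⟨ha, hb, (hcont a).mp hca, (hcont b).mp hcb⟩)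
      · refine Or.inr (Or.inr ⟨hb, ?_, (hcont a).mp hca⟩)
        have h1 : L b ≠ p b := fun hh => hdb ((hcont b).mpr hh)
        have h2 := hLle b hb
        have h3 := hjump b
        rw [abs_le] at h3
        omega
    unfold IsRealPyramid
    refine ⟨⟨max M (max |a| |b| + 1), ?_⟩, ?_, ?_, ?_, ?_, ?_, ?_⟩
    · intro x hx
      show p x + ind a b x = 0
      have h1 : p x = 0 := hM x (le_trans (le_max_left _ _) hx)
      have h2 : ind a b x = 0 := by
        apply ind_of_not_mem
        rintro ⟨h3, h4⟩
        have hb1 := neg_abs_le a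
        have hb2 := le_abs_self b
        have l1 := le_max_left |a| |b|
        have l2 := le_max_right |a| |b|
        have l3 : |x| ≤ max |a| |b| := abs_le.mpr ⟨by linarith, by linarith⟩
        have l4 := le_trans (le_max_right M (max |a| |b| + 1)) hx
        linarith
      rw [h1, h2]
    · intro x
      show p x + ind a b x ≤ p 0 + ind a b 0
      by_cases hx : a ≤ x ∧ x < b
      · rw [ind_of_mem hx.1 hx.2]
        rcases key with ⟨ha, e1, _⟩ | ⟨ha, hb, _, _⟩ | ⟨hb, e1, _⟩
        · rw [ind_of_not_mem (fun h => absurd (ha.trans_le h.1) (lt_irrefl 0))]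
          have h1 : p x ≤ p a := hanti ha.le hx.1
          have h2 := hL0 a
          omega
        · rw [ind_of_mem ha hb]
          have := hmax x; omega
        · rw [ind_of_not_mem (fun h => absurd (h.2.trans_le hb) (lt_irrefl 0))]
          obtain ⟨y, hy1, hy2, hy3⟩ := hwit b x hx.2
          have h1 : p x ≤ p y := hmono hy1.le (by linarith)
          have h2 := hmax b
          omega
      · rw [ind_of_not_mem hx]
        have h1 := hmax x
        omega
    · intro x y hxy hy0
      show p x + ind a b x ≤ p y + ind a b y
      have hpm := hmono hxy hy0
      by_cases hx : a ≤ x ∧ x < b <;> by_cases hy' : a ≤ y ∧ y < b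
      · rw [ind_of_mem hx.1 hx.2, ind_of_mem hy'.1 hy'.2]; omega
      · rw [ind_of_mem hx.1 hx.2, ind_of_not_mem hy']
        have hby : b ≤ y := by
          rcases not_and_or.mp hy' with h1 | h1
          · exact absurd (hx.1.trans hxy) h1
          · exact not_lt.mp h1
        rcases key with ⟨ha, _, _⟩ | ⟨_, hbp, _, _⟩ | ⟨_, e1, _⟩
        · exact absurd hy0 (not_le.mpr (lt_of_lt_of_le ha (hx.1.trans hxy)))
        · exact absurd hy0 (not_le.mpr (lt_of_lt_of_le hbp hby))
        · obtain ⟨y', h1, h2, h3⟩ := hwit b x hx.2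
          have hb0 : b ≤ 0 := hby.trans hy0
          have h4 : p x ≤ p y' := hmono h1.le (by linarith)
          have h5 : p b ≤ p y := hmono hby hy0
          omega
      · rw [ind_of_not_mem hx, ind_of_mem hy'.1 hy'.2]; omega
      · rw [ind_of_not_mem hx, ind_of_not_mem hy']; omega
    · intro x y hx0 hxy
      show p y + ind a b y ≤ p x + ind a b x
      have hpm := hanti hx0 hxy
      by_cases hx : a ≤ x ∧ x < b <;> by_cases hy' : a ≤ y ∧ y < b
      · rw [ind_of_mem hx.1 hx.2, ind_of_mem hy'.1 hy'.2]; omega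
      · rw [ind_of_mem hx.1 hx.2, ind_of_not_mem hy']; omega
      · rw [ind_of_not_mem hx, ind_of_mem hy'.1 hy'.2]
        have hxa : x < a := by
          rcases not_and_or.mp hx with h1 | h1
          · exact not_le.mp h1
          · exact absurd (lt_of_le_of_lt hxy hy'.2) h1
        rcases key with ⟨ha, e1, _⟩ | ⟨ha2, _, _, _⟩ | ⟨hb, _, _⟩
        · obtain ⟨y', h1, h2, h3⟩ := hwit a x hxa
          have h4 : p y' ≤ p x := hanti hx0 h1.le
          have h5 : p y ≤ p a := hanti ha.le hy'.1
          omega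
        · exact absurd hx0 (not_le.mpr (lt_of_lt_of_le hxa ha2))
        · exact absurd hx0 (not_le.mpr (lt_of_le_of_lt hxy (lt_of_lt_of_le hy'.2 hb)))
      · rw [ind_of_not_mem hx, ind_of_not_mem hy']; omega
    · intro x
      rw [cwa_iff]
      filter_upwards [cwa_iff.mp (hrc x), ind_right_ev a b x] with y h1 h2
      simp only [h1, h2]
    · apply Set.Finite.subset (hfin.union ((Set.finite_singleton b).insert a))
      intro x hx
      by_contra hmem
      simp only [Set.mem_union, Set.mem_setOf_eq, Set.mem_insert_iff,
        Set.mem_singleton_iff, not_or, not_not] at hmem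
      obtain ⟨hcx, hxa, hxb⟩ := hmem
      apply hx
      rw [contAt_iff]
      have hpind : ∀ᶠ y in 𝓝 x, ind a b y = ind a b x := by
        rcases lt_trichotomy x a with h1 | h1 | h1
        · filter_upwards [Iio_mem_nhds h1] with y (hy : y < a)
          rw [ind_of_not_mem (fun hh => absurd hy (not_lt.2 hh.1)),
            ind_of_not_mem (fun hh => absurd h1 (not_lt.2 hh.1))]
        · exact absurd h1 hxa
        · rcases lt_trichotomy x b with h2 | h2 | h2
          · filter_upwards [Ioo_mem_nhds h1 h2] with y hy
            rw [ind_of_mem hy.1.le hy.2, ind_of_mem h1.le h2]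
          · exact absurd h2 hxb
          · filter_upwards [Ioi_mem_nhds h2] with y (hy : b < y)
            rw [ind_of_not_mem (fun hh => absurd hh.2 (not_lt.2 hy.le)),
              ind_of_not_mem (fun hh => absurd hh.2 (not_lt.2 h2.le))]
      filter_upwards [contAt_iff.mp hcx, hpind] with y h1 h2
      simp only [h1, h2]
    · intro x
      show |((p x + ind a b x : ℕ) : ℤ)
        - ((Function.leftLim (fun z => p z + ind a b z) x : ℕ) : ℤ)| ≤ 1
      rw [hqL x]
      by_cases hxa : x = a
      · subst hxa
        rw [ind_of_mem (le_refl x) hab, if_neg (fun h => lt_irrefl x h.1)]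
        have e1 : L x = p x + 1 ∨ L x = p x := by
          rcases key with ⟨_, e, _⟩ | ⟨_, _, e, _⟩ | ⟨_, _, e⟩
          exacts [Or.inl e, Or.inr e, Or.inr e]
        rw [abs_le]; omega
      · by_cases hxb : x = b
        · subst hxb
          rw [ind_of_not_mem (fun h => lt_irrefl x h.2), if_pos ⟨hab, le_refl x⟩]
          have e1 : L x = p x ∨ p x = L x + 1 := by
            rcases key with ⟨_, _, e⟩ | ⟨_, _, _, e⟩ | ⟨_, e, _⟩
            exacts [Or.inl e, Or.inl e, Or.inr e]
          rw [abs_le]; omega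
        · have h2 : ind a b x = (if a < x ∧ x ≤ b then 1 else 0) := by
            by_cases hm : a ≤ x ∧ x < b
            · rw [ind_of_mem hm.1 hm.2, if_pos ⟨lt_of_le_of_ne hm.1 (Ne.symm hxa), hm.2.le⟩]
            · rw [ind_of_not_mem hm, if_neg (fun hh => hm ⟨hh.1.le, lt_of_le_of_ne hh.2 hxb⟩)]
          rw [← h2]
          have h3 := hjump x
          rw [abs_le] at h3 ⊢
          omega
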